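/- Let J = {1,…,n−1} and let 𝒥 be the set of (n−1)-element subsets of V. Let E ∈ B_V and suppose there is k > 0 such that for every F′ ∈ B⁰_V and every I ∈ 𝒥, ν^J(π_J(F′ ∩ E)) ≤ k·ν^I(π_I(F′ ∩ E)). Suppose F ⊆ E is of the form F = E ∩ ⋂_{i<ω} F_i with each F_i ∈ B⁰_V, and let I ∈ 𝒥 with I ≠ J. Then: (2) for every C ∈ B⁰_I, ν^J(π_J(F ∖ π_I⁻¹(C))) ≥ ν^J(π_J(F)) − k·ν^I(C ∩ π_I(F)); and (3) for every B ∈ B⁰_I, ν^J(π_J(F ∩ π_I⁻¹(B))) ≥ ν^J(π_J(F)) − k·ν^I(π_I(F) ∖ B). -/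

import Mathlib

open FirstOrder MeasureTheory Set
open scoped ENNReal

namespace MeasureAmalgamation

variable (L : FirstOrder.Language) (M : Type*) [L.Structure M]

/-- `𝓜` is ℵ₁-saturated: every countable finitely satisfiable set of `L`-formulas in one
free variable with parameters from `M` is realized in `M`. -/
def Aleph1Saturated : Prop :=
  ∀ S : Set (L.Formula (M ⊕ Fin 1)), S.Countable →
    (∀ T : Finset (L.Formula (M ⊕ Fin 1)), ↑T ⊆ S →
      ∃ a : M, ∀ φ ∈ T, φ.Realize (Sum.elim id fun _ => a)) →
    ∃ a : M, ∀ φ ∈ S, φ.Realize (Sum.elim id fun _ => a)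

/-- The σ-algebra `B_α` generated by the Boolean algebra `B⁰_α` of parameter-definable
subsets of `M^α`. -/
def defSigma (α : Type*) : MeasurableSpace (α → M) :=
  MeasurableSpace.generateFrom {s : Set (α → M) | (Set.univ : Set M).Definable L s}

variable (n : ℕ)

/-- The projection `π_I : M^V → M^I`. -/
def proj (I : Finset (Fin n)) (x : Fin n → M) : ↥I → M := fun i => x ↑i

/-- The Boolean algebra `B⁰_{V,I}` generated by preimages under `π_I` of sets in `B⁰_I`. -/
def cylDef (I : Finset (Fin n)) : Set (Set (Fin n → M)) :=
  {s | ∃ t : Set (↥I → M), (Set.univ : Set M).Definable L t ∧ s = proj M n I ⁻¹' t}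

/-- The σ-algebra `B_{V,I}` generated by `B⁰_{V,I}`. -/
def cylSigma (I : Finset (Fin n)) : MeasurableSpace (Fin n → M) :=
  MeasurableSpace.generateFrom (cylDef L M n I)

/-- The push-forward measure `ν^I` of `ν = ν^V` under `π_I`. -/
noncomputable def nuI (ν : @Measure (Fin n → M) (defSigma L M (Fin n)))
    (I : Finset (Fin n)) : @Measure (↥I → M) (defSigma L M ↥I) :=
  @Measure.map _ _ (defSigma L M (Fin n)) (defSigma L M ↥I) (proj M n I) ν

/-- Combining a `W`-tuple and a `(V ∖ W)`-tuple into a `V`-tuple. -/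
def glue (W : Finset (Fin n)) (x : ↥W → M) (y : ↥(Wᶜ) → M) : Fin n → M :=
  fun i => if h : i ∈ W then x ⟨i, h⟩ else y ⟨i, Finset.mem_compl.mpr h⟩

/-- The Definability condition: for all `W ⊆ V` and `B ∈ B_V`, the function
`x_W ↦ ν^{V∖W}(B(x_W))` is `B_W`-measurable. -/
def DefinabilityCond (ν : @Measure (Fin n → M) (defSigma L M (Fin n))) : Prop :=
  ∀ (W : Finset (Fin n)) (B : Set (Fin n → M)),
    MeasurableSet[defSigma L M (Fin n)] B →
    @Measurable _ _ (defSigma L M ↥W) _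
      (fun x : ↥W → M => nuI L M n ν Wᶜ {y : ↥(Wᶜ) → M | glue M n W x y ∈ B})

/-- The Fubini condition: for all `W ⊆ V` and essentially bounded `B_V`-measurable
`f : M^V → ℝ`, `∫ f dν^V = ∫∫ f dν^W dν^{V∖W}`. -/
def FubiniCond (ν : @Measure (Fin n → M) (defSigma L M (Fin n))) : Prop :=
  ∀ (W : Finset (Fin n)) (f : (Fin n → M) → ℝ),
    @Measurable _ _ (defSigma L M (Fin n)) _ f →
    (∃ C : ℝ, ∀ᵐ x ∂ν, |f x| ≤ C) →
    ∫ x, f x ∂ν =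
      ∫ y, (∫ x, f (glue M n W x y) ∂(nuI L M n ν W)) ∂(nuI L M n ν Wᶜ)

/-- The index set `J = {1,…,n−1}`, i.e. all indices except the last one. -/
def Jset (n : ℕ) (hn : 2 ≤ n) : Finset (Fin n) := {(⟨n - 1, by omega⟩ : Fin n)}ᶜ

section Auxiliary

/-- Approximation of measurable sets from outside by countable unions of sets in a
generating Boolean algebra. -/
theorem algebra_approx {X : Type*} {𝒜 : Set (Set X)}
    (hempty : ∅ ∈ 𝒜) (huniv : Set.univ ∈ 𝒜)
    (hinter : ∀ A ∈ 𝒜, ∀ B ∈ 𝒜, A ∩ B ∈ 𝒜)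
    (hdiff : ∀ A ∈ 𝒜, ∀ B ∈ 𝒜, A \ B ∈ 𝒜)
    (μ : @Measure X (MeasurableSpace.generateFrom 𝒜))
    (hfin : μ Set.univ ≠ ⊤)
    {T : Set X} (hT : MeasurableSet[MeasurableSpace.generateFrom 𝒜] T)
    {ε : ℝ≥0∞} (hε : ε ≠ 0) :
    ∃ t : ℕ → Set X, (∀ i, t i ∈ 𝒜) ∧ T ⊆ ⋃ i, t i ∧ μ (⋃ i, t i) ≤ μ T + ε := by
  classical
  letI ms : MeasurableSpace X := MeasurableSpace.generateFrom 𝒜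
  set m : Set X → ℝ≥0∞ := fun s => if s ∈ 𝒜 then μ s else ⊤ with hm
  have m_empty : m ∅ = 0 := by simp [hm, hempty]
  set m0 : OuterMeasure X := OuterMeasure.ofFunction m m_empty with hm0
  have hmem : ∀ A ∈ 𝒜, MeasurableSet[ms] A := fun A hA =>
    MeasurableSpace.measurableSet_generateFrom hA
  have hcar : ms ≤ m0.caratheodory := by
    rw [MeasurableSpace.generateFrom_le_iff]
    intro A hA
    refine OuterMeasure.ofFunction_caratheodory (fun t => ?_)
    by_cases ht : t ∈ 𝒜
    · have h1 : m (t ∩ A) = μ (t ∩ A) := if_pos (hinter t ht A hA)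
      have h2 : m (t \ A) = μ (t \ A) := if_pos (hdiff t ht A hA)
      have h3 : m t = μ t := if_pos ht
      rw [h1, h2, h3, measure_inter_add_diff t (hmem A hA)]
    · simp [hm, ht]
  have hle : ∀ s, μ s ≤ m0 s := by
    have : μ.toOuterMeasure ≤ m0 := OuterMeasure.le_ofFunction.mpr (fun u => by
      by_cases hu : u ∈ 𝒜 <;> simp [hm, hu])
    exact fun s => this s
  set μ' : Measure X := m0.toMeasure hcar with hμ'
  have hA_eq : ∀ A ∈ 𝒜, μ' A = μ A := by
    intro A hA
    rw [hμ', toMeasure_apply _ _ (hmem A hA)]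
    exact le_antisymm ((OuterMeasure.ofFunction_le A).trans (le_of_eq (if_pos hA))) (hle A)
  haveI : IsFiniteMeasure μ' := by
    constructor
    rw [hA_eq _ huniv]
    exact lt_top_iff_ne_top.mpr hfin
  have hμ'μ : μ' = μ := by
    refine ext_of_generate_finite 𝒜 rfl ?_ hA_eq (hA_eq _ huniv)
    intro s hs t ht _
    exact hinter s hs t ht
  have hTfin : μ T ≠ ⊤ := fun h => hfin (top_le_iff.mp (h ▸ measure_mono (subset_univ T)))
  have hm0T : m0 T = μ T := by
    rw [← hμ'μ, hμ', toMeasure_apply _ _ hT]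
  have hlt : m0 T < μ T + ε := by
    rw [hm0T]; exact ENNReal.lt_add_right hTfin hε
  rw [hm0, OuterMeasure.ofFunction_eq_iInf_mem m m_empty
    (P := fun s => s ∈ 𝒜) (fun s hs => if_neg hs)] at hlt
  simp only [iInf_lt_iff] at hlt
  obtain ⟨t, htA, htcov, htsum⟩ := hlt
  refine ⟨t, htA, htcov, ?_⟩
  calc μ (⋃ i, t i) ≤ ∑' i, μ (t i) := measure_iUnion_le t
    _ = ∑' i, m (t i) := by
        refine tsum_congr fun i => ?_
        rw [hm]
        simp [htA i]
    _ ≤ μ T + ε := htsum.le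

/-- The projection `proj` is measurable with respect to the definable σ-algebras. -/
theorem measurable_proj (L : FirstOrder.Language) (M : Type*) [L.Structure M]
    (n : ℕ) (I : Finset (Fin n)) :
    @Measurable _ _ (defSigma L M (Fin n)) (defSigma L M ↥I) (proj M n I) := by
  apply @measurable_generateFrom _ _ (defSigma L M (Fin n))
  intro t ht
  exact MeasurableSpace.measurableSet_generateFrom
    (Set.Definable.preimage_comp (Subtype.val : ↥I → Fin n) ht)

/-- Preimages of definable sets under `proj` are definable. -/
theorem definable_preimage_proj (L : FirstOrder.Language) (M : Type*) [L.Structure M]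
    (n : ℕ) (I : Finset (Fin n)) {t : Set (↥I → M)}
    (ht : (Set.univ : Set M).Definable L t) :
    (Set.univ : Set M).Definable L (proj M n I ⁻¹' t) :=
  Set.Definable.preimage_comp (Subtype.val : ↥I → Fin n) ht

/-- Accumulations of definable sets are definable. -/
theorem definable_accumulate (L : FirstOrder.Language) (M : Type*) [L.Structure M]
    {α : Type*} (t : ℕ → Set (α → M)) (ht : ∀ i, (Set.univ : Set M).Definable L (t i)) :
    ∀ k, (Set.univ : Set M).Definable L (Set.accumulate t k) := by
  intro k
  induction k with
  | zero =>
      have : Set.accumulate t 0 = t 0 := by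
        ext x; simp [Set.mem_accumulate, Nat.le_zero]
      rw [this]; exact ht 0
  | succ k ih =>
      have : Set.accumulate t (k + 1) = Set.accumulate t k ∪ t (k + 1) := by
        ext x
        simp only [Set.mem_accumulate, Set.mem_union]
        constructor
        · rintro ⟨y, hy, hx⟩
          rcases eq_or_lt_of_le hy with rfl | h
          · exact Or.inr hx
          · exact Or.inl ⟨y, Nat.lt_succ_iff.mp h, hx⟩
        · rintro (⟨y, hy, hx⟩ | hx)
          · exact ⟨y, Nat.le_succ_of_le hy, hx⟩
          · exact ⟨k + 1, le_rfl, hx⟩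
      rw [this]; exact ih.union (ht (k + 1))

/-- The key inequality: condition (c) extends from definable sets to arbitrary subsets
of `E`. -/
theorem key_ineq
    (L : FirstOrder.Language) (M : Type*) [L.Structure M]
    (n : ℕ) (hn : 2 ≤ n)
    (ν : @Measure (Fin n → M) (defSigma L M (Fin n)))
    (hprob : ν Set.univ = 1)
    (E : Set (Fin n → M))
    (κ : NNReal) (hκ : 0 < κ)
    (hc : ∀ F' : Set (Fin n → M), (Set.univ : Set M).Definable L F' →
      ∀ I : Finset (Fin n), I.card = n - 1 →
        nuI L M n ν (Jset n hn) (proj M n (Jset n hn) '' (F' ∩ E)) ≤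
          (κ : ℝ≥0∞) * nuI L M n ν I (proj M n I '' (F' ∩ E)))
    (I : Finset (Fin n)) (hI : I.card = n - 1)
    (S : Set (Fin n → M)) (hS : S ⊆ E) :
    nuI L M n ν (Jset n hn) (proj M n (Jset n hn) '' S) ≤
      (κ : ℝ≥0∞) * nuI L M n ν I (proj M n I '' S) := by
  letI : MeasurableSpace (↥I → M) := defSigma L M ↥I
  letI : MeasurableSpace (↥(Jset n hn) → M) := defSigma L M ↥(Jset n hn)
  set μI := nuI L M n ν I with hμI
  set μJ := nuI L M n ν (Jset n hn) with hμJ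
  have hκ0 : (κ : ℝ≥0∞) ≠ 0 := by simpa using hκ.ne'
  have hκt : (κ : ℝ≥0∞) ≠ ⊤ := ENNReal.coe_ne_top
  have hfinI : μI Set.univ ≠ ⊤ := by
    rw [hμI, nuI, Measure.map_apply (measurable_proj L M n I) MeasurableSet.univ,
      Set.preimage_univ, hprob]
    exact ENNReal.one_ne_top
  refine ENNReal.le_of_forall_pos_le_add fun δ hδ _ => ?_
  set ε : ℝ≥0∞ := (δ : ℝ≥0∞) / κ with hεdef
  have hε0 : ε ≠ 0 := by
    rw [hεdef]
    simp only [ne_eq, ENNReal.div_eq_zero_iff, not_or]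
    exact ⟨by exact_mod_cast hδ.ne', hκt⟩
  have hκε : (κ : ℝ≥0∞) * ε = δ := ENNReal.mul_div_cancel hκ0 hκt
  -- measurable cover of the projection
  set T := toMeasurable μI (proj M n I '' S) with hT
  have hTsub : proj M n I '' S ⊆ T := subset_toMeasurable _ _
  have hTval : μI T = μI (proj M n I '' S) := measure_toMeasurable _
  have hTm : MeasurableSet[defSigma L M ↥I] T := measurableSet_toMeasurable _ _
  -- approximate T by a countable union of definable sets
  obtain ⟨t, htdef, htcov, htval⟩ :=
    algebra_approx (𝒜 := {s : Set (↥I → M) | (Set.univ : Set M).Definable L s})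
      (Set.definable_empty) (Set.definable_univ)
      (fun A hA B hB => Set.Definable.inter hA hB)
      (fun A hA B hB => Set.Definable.sdiff hA hB)
      μI hfinI hTm hε0
  -- pass to the increasing accumulation
  set D : ℕ → Set (↥I → M) := Set.accumulate t with hD
  have hDdef : ∀ k, (Set.univ : Set M).Definable L (D k) := definable_accumulate L M t htdef
  have hDU : ∀ k, D k ⊆ ⋃ i, t i := fun k => Set.accumulate_subset_iUnion k
  have hScover : proj M n (Jset n hn) '' S =
      ⋃ k, proj M n (Jset n hn) '' (S ∩ proj M n I ⁻¹' (D k)) := by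
    apply Set.Subset.antisymm
    · rintro _ ⟨x, hx, rfl⟩
      have : proj M n I x ∈ ⋃ i, t i := htcov (hTsub ⟨x, hx, rfl⟩)
      rw [← Set.iUnion_accumulate] at this
      obtain ⟨k, hk⟩ := Set.mem_iUnion.mp this
      exact Set.mem_iUnion.mpr ⟨k, ⟨x, ⟨hx, hk⟩, rfl⟩⟩
    · exact Set.iUnion_subset fun k => Set.image_mono (Set.inter_subset_left)
  have hmono : Monotone fun k => proj M n (Jset n hn) '' (S ∩ proj M n I ⁻¹' (D k)) :=
    fun a b hab => Set.image_mono
      (Set.inter_subset_inter_right _ (Set.preimage_mono (Set.monotone_accumulate hab)))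
  have hsup : μJ (proj M n (Jset n hn) '' S) =
      ⨆ k, μJ (proj M n (Jset n hn) '' (S ∩ proj M n I ⁻¹' (D k))) := by
    rw [hScover]
    exact hmono.measure_iUnion
  rw [hsup]
  refine iSup_le fun k => ?_
  have step1 : μJ (proj M n (Jset n hn) '' (S ∩ proj M n I ⁻¹' (D k))) ≤
      μJ (proj M n (Jset n hn) '' ((proj M n I ⁻¹' (D k)) ∩ E)) := by
    apply measure_mono
    apply Set.image_mono
    exact fun x hx => ⟨hx.2, hS hx.1⟩
  have step2 : μJ (proj M n (Jset n hn) '' ((proj M n I ⁻¹' (D k)) ∩ E)) ≤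
      (κ : ℝ≥0∞) * μI (proj M n I '' ((proj M n I ⁻¹' (D k)) ∩ E)) :=
    hc _ (definable_preimage_proj L M n I (hDdef k)) I hI
  have step3 : μI (proj M n I '' ((proj M n I ⁻¹' (D k)) ∩ E)) ≤ μI (D k) :=
    measure_mono ((Set.image_mono Set.inter_subset_left).trans
      (Set.image_preimage_subset _ _))
  have step4 : μI (D k) ≤ μI (proj M n I '' S) + ε := by
    calc μI (D k) ≤ μI (⋃ i, t i) := measure_mono (hDU k)
      _ ≤ μI T + ε := htval
      _ = μI (proj M n I '' S) + ε := by rw [hTval]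
  calc μJ (proj M n (Jset n hn) '' (S ∩ proj M n I ⁻¹' (D k)))
      ≤ (κ : ℝ≥0∞) * μI (D k) := step1.trans (step2.trans (by gcongr))
    _ ≤ (κ : ℝ≥0∞) * (μI (proj M n I '' S) + ε) := by gcongr
    _ = (κ : ℝ≥0∞) * μI (proj M n I '' S) + δ := by rw [mul_add, hκε]

end Auxiliary

/-- **Lemma 2.5(2),(3)**: if `E ∈ B_V` satisfies condition (c), `F ⊆ E` is a countable
intersection of sets in `B⁰_V` with `E`, and `I ≠ J` is an `(n−1)`-subset of `V`, then
(2) for `C ∈ B⁰_I`, `ν^J(π_J(F ∖ π_I⁻¹(C))) ≥ ν^J(π_J(F)) − k·ν^I(C ∩ π_I(F))`, and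
(3) for `B ∈ B⁰_I`, `ν^J(π_J(F ∩ π_I⁻¹(B))) ≥ ν^J(π_J(F)) − k·ν^I(π_I(F) ∖ B)`. -/
theorem lemma_intersection_parts
    (L : FirstOrder.Language) (M : Type*) [L.Structure M]
    [Countable (Σ l, L.Functions l)] [Countable (Σ l, L.Relations l)]
    (hsat : Aleph1Saturated L M)
    (n : ℕ) (hn : 2 ≤ n)
    (ν : @Measure (Fin n → M) (defSigma L M (Fin n)))
    (hprob : ν Set.univ = 1)
    (hdef : DefinabilityCond L M n ν)
    (hfub : FubiniCond L M n ν)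
    (E : Set (Fin n → M))
    (hE : MeasurableSet[defSigma L M (Fin n)] E)
    (κ : NNReal) (hκ : 0 < κ)
    (hc : ∀ F' : Set (Fin n → M), (Set.univ : Set M).Definable L F' →
      ∀ I : Finset (Fin n), I.card = n - 1 →
        nuI L M n ν (Jset n hn) (proj M n (Jset n hn) '' (F' ∩ E)) ≤
          (κ : ℝ≥0∞) * nuI L M n ν I (proj M n I '' (F' ∩ E)))
    (Fseq : ℕ → Set (Fin n → M))
    (hFseq : ∀ i : ℕ, (Set.univ : Set M).Definable L (Fseq i))
    (F : Set (Fin n → M)) (hF : F = E ∩ ⋂ i : ℕ, Fseq i)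
    (I : Finset (Fin n)) (hI : I.card = n - 1) (hIJ : I ≠ Jset n hn) :
    (∀ C : Set (↥I → M), (Set.univ : Set M).Definable L C →
      nuI L M n ν (Jset n hn) (proj M n (Jset n hn) '' (F \ proj M n I ⁻¹' C)) ≥
        nuI L M n ν (Jset n hn) (proj M n (Jset n hn) '' F) -
          (κ : ℝ≥0∞) * nuI L M n ν I (C ∩ proj M n I '' F)) ∧
    (∀ B : Set (↥I → M), (Set.univ : Set M).Definable L B →
      nuI L M n ν (Jset n hn) (proj M n (Jset n hn) '' (F ∩ proj M n I ⁻¹' B)) ≥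
        nuI L M n ν (Jset n hn) (proj M n (Jset n hn) '' F) -
          (κ : ℝ≥0∞) * nuI L M n ν I (proj M n I '' F \ B)) := by
  have hFE : F ⊆ E := by rw [hF]; exact Set.inter_subset_left
  constructor
  · intro C _
    rw [ge_iff_le, tsub_le_iff_right]
    have hsplit : proj M n (Jset n hn) '' F ⊆
        proj M n (Jset n hn) '' (F \ proj M n I ⁻¹' C) ∪
        proj M n (Jset n hn) '' (F ∩ proj M n I ⁻¹' C) := by
      rw [← Set.image_union]
      apply Set.image_mono
      intro x hx
      by_cases h : x ∈ proj M n I ⁻¹' C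
      · exact Or.inr ⟨hx, h⟩
      · exact Or.inl ⟨hx, h⟩
    have h1 := (measure_mono (μ := nuI L M n ν (Jset n hn)) hsplit).trans
      (measure_union_le _ _)
    have h2 := key_ineq L M n hn ν hprob E κ hκ hc I hI (F ∩ proj M n I ⁻¹' C)
      (fun x hx => hFE hx.1)
    have h3 : proj M n I '' (F ∩ proj M n I ⁻¹' C) ⊆ C ∩ proj M n I '' F := by
      rintro _ ⟨x, ⟨hxF, hxC⟩, rfl⟩
      exact ⟨hxC, ⟨x, hxF, rfl⟩⟩
    calc nuI L M n ν (Jset n hn) (proj M n (Jset n hn) '' F)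
        ≤ nuI L M n ν (Jset n hn) (proj M n (Jset n hn) '' (F \ proj M n I ⁻¹' C)) +
          nuI L M n ν (Jset n hn) (proj M n (Jset n hn) '' (F ∩ proj M n I ⁻¹' C)) := h1
      _ ≤ nuI L M n ν (Jset n hn) (proj M n (Jset n hn) '' (F \ proj M n I ⁻¹' C)) +
          (κ : ℝ≥0∞) * nuI L M n ν I (proj M n I '' (F ∩ proj M n I ⁻¹' C)) := by gcongr
      _ ≤ nuI L M n ν (Jset n hn) (proj M n (Jset n hn) '' (F \ proj M n I ⁻¹' C)) +
          (κ : ℝ≥0∞) * nuI L M n ν I (C ∩ proj M n I '' F) :=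
            add_le_add_right (mul_le_mul_right (measure_mono h3) _) _
  · intro B _
    rw [ge_iff_le, tsub_le_iff_right]
    have hsplit : proj M n (Jset n hn) '' F ⊆
        proj M n (Jset n hn) '' (F ∩ proj M n I ⁻¹' B) ∪
        proj M n (Jset n hn) '' (F \ proj M n I ⁻¹' B) := by
      rw [← Set.image_union]
      apply Set.image_mono
      intro x hx
      by_cases h : x ∈ proj M n I ⁻¹' B
      · exact Or.inl ⟨hx, h⟩
      · exact Or.inr ⟨hx, h⟩
    have h1 := (measure_mono (μ := nuI L M n ν (Jset n hn)) hsplit).trans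
      (measure_union_le _ _)
    have h2 := key_ineq L M n hn ν hprob E κ hκ hc I hI (F \ proj M n I ⁻¹' B)
      (fun x hx => hFE hx.1)
    have h3 : proj M n I '' (F \ proj M n I ⁻¹' B) ⊆ proj M n I '' F \ B := by
      rintro _ ⟨x, ⟨hxF, hxB⟩, rfl⟩
      exact ⟨⟨x, hxF, rfl⟩, hxB⟩
    calc nuI L M n ν (Jset n hn) (proj M n (Jset n hn) '' F)
        ≤ nuI L M n ν (Jset n hn) (proj M n (Jset n hn) '' (F ∩ proj M n I ⁻¹' B)) +
          nuI L M n ν (Jset n hn) (proj M n (Jset n hn) '' (F \ proj M n I ⁻¹' B)) := h1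
      _ ≤ nuI L M n ν (Jset n hn) (proj M n (Jset n hn) '' (F ∩ proj M n I ⁻¹' B)) +
          (κ : ℝ≥0∞) * nuI L M n ν I (proj M n I '' (F \ proj M n I ⁻¹' B)) := by gcongr
      _ ≤ nuI L M n ν (Jset n hn) (proj M n (Jset n hn) '' (F ∩ proj M n I ⁻¹' B)) +
          (κ : ℝ≥0∞) * nuI L M n ν I (proj M n I '' F \ B) :=
            add_le_add_right (mul_le_mul_right (measure_mono h3) _) _


end MeasureAmalgamation
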